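/- arXiv:1301.4748 — 5 statements merged into one kernel-verified Lean document; each statement's English description precedes it below -/
import Mathlib

section
/- Complex linearity of v ↦ L_v j (stated after Lemma 2.14 and used again in the proof of Lemma 8.1): Let E be a complex normed vector space and let v, W : E → E be vector fields that are differentiable over ℝ at a point z. Then (L_{Complex.I • v} J)(W)(z) = Complex.I • ((L_v J)(W)(z)); that is, L_{jv} j = j ∘ L_v j. -/
open VectorField

/-- The Lie derivative of the standard complex structure `J = Complex.I • ·`
along the vector field `v`, evaluated on the vector field `W`:
`(L_v J)(W) := [v, J ∘ W] - J ∘ [v, W]`. -/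
noncomputable def lieDerivJ {E : Type*} [NormedAddCommGroup E] [NormedSpace ℂ E]
    (v W : E → E) : E → E :=
  fun z =>
    lieBracket ℝ v (fun x => Complex.I • W x) z - Complex.I • lieBracket ℝ v W z

/-- Complex linearity of `v ↦ L_v j`: one has `L_{jv} j = j ∘ L_v j`. -/
theorem lieDerivJ_smul_I {E : Type*} [NormedAddCommGroup E] [NormedSpace ℂ E]
    (v W : E → E) (z : E)
    (hv : DifferentiableAt ℝ v z) (hW : DifferentiableAt ℝ W z) :
    lieDerivJ (fun x => Complex.I • v x) W z = Complex.I • lieDerivJ v W z := by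
  have hIW : fderiv ℝ (fun x => Complex.I • W x) z = Complex.I • fderiv ℝ W z :=
    fderiv_const_smul hW Complex.I
  have hIv : fderiv ℝ (fun x => Complex.I • v x) z = Complex.I • fderiv ℝ v z :=
    fderiv_const_smul hv Complex.I
  simp only [lieDerivJ, VectorField.lieBracket, hIW, hIv,
    ContinuousLinearMap.smul_apply, smul_sub, smul_smul, Complex.I_mul_I,
    neg_one_smul, map_smul]
  abel
end

section
/- Product step in the proof of Lemma 2.14 ('j ∘ ∇(he) − (∇(he)) ∘ j = j ∘ 2(∂̄h)e'): Let E be a complex normed vector space, let e : E → E be differentiable over ℂ at a point z, let h : E → ℂ be differentiable over ℝ at z, let W : E → E be differentiable over ℝ at z, and set v x := h x • e x. Then (L_v J)(W)(z) = (Complex.I * (fderiv ℝ h z)(W z) − (fderiv ℝ h z)(Complex.I • W z)) • e z, and this scalar coefficient equals 2 * Complex.I * ((∂̄ h)(z)(W z)). -/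
open VectorField

/-- The antiholomorphic part of the real derivative of a function `h : E → ℂ`
at `z`, applied to `w`. -/
noncomputable def dbarFun {E : Type*} [NormedAddCommGroup E] [NormedSpace ℂ E]
    (h : E → ℂ) (z : E) (w : E) : ℂ :=
  (1 / 2 : ℂ) * ((fderiv ℝ h z) w + Complex.I * (fderiv ℝ h z) (Complex.I • w))

/-- Product step in the proof of Lemma 2.14: for `v = h • e` with `e` holomorphic
and `h : E → ℂ`, one has
`(L_v J)(W)(z) = (I * Dh(z)(W z) - Dh(z)(I • W z)) • e z`, and this scalar
coefficient equals `2 * I * (∂̄ h)(z)(W z)`. -/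
theorem lieDerivJ_smul_holomorphic {E : Type*} [NormedAddCommGroup E]
    [NormedSpace ℂ E] (e : E → E) (h : E → ℂ) (W : E → E) (z : E)
    (he : DifferentiableAt ℂ e z) (hh : DifferentiableAt ℝ h z)
    (hW : DifferentiableAt ℝ W z) :
    lieDerivJ (fun x => h x • e x) W z
        = (Complex.I * (fderiv ℝ h z) (W z)
            - (fderiv ℝ h z) (Complex.I • W z)) • e z ∧
      Complex.I * (fderiv ℝ h z) (W z) - (fderiv ℝ h z) (Complex.I • W z)
        = 2 * Complex.I * dbarFun h z (W z) := by
  have he' : DifferentiableAt ℝ e z := he.restrictScalars ℝ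
  have hDv : fderiv ℝ (fun x => h x • e x) z
      = h z • fderiv ℝ e z + (fderiv ℝ h z).smulRight (e z) := fderiv_smul hh he'
  have hDJW : fderiv ℝ (fun x => Complex.I • W x) z = Complex.I • fderiv ℝ W z :=
    fderiv_const_smul hW Complex.I
  have hDe : fderiv ℝ e z = (fderiv ℂ e z).restrictScalars ℝ :=
    he.fderiv_restrictScalars ℝ
  constructor
  · simp only [lieDerivJ, lieBracket, hDv, hDJW, hDe]
    simp only [ContinuousLinearMap.add_apply, ContinuousLinearMap.smul_apply,
      ContinuousLinearMap.smulRight_apply, ContinuousLinearMap.coe_restrictScalars',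
      map_smul, smul_smul]
    module
  · unfold dbarFun
    linear_combination (-(fderiv ℝ h z (Complex.I • W z))) * Complex.I_mul_I
end

section
/- Higher-order consequence of Claim 2.17 ('if a section vanishes at t = 0 to order n − 1, then it is equal to t^n times a smooth section'): Let E be a real normed vector space, F a real Banach space, n a positive natural number, and ν : E × ℝ → F smooth (ContDiff ℝ ∞). If for every x ∈ E and every k < n the k-th iterated derivative of the function t ↦ ν(x, t) vanishes at t = 0, then there exists a smooth ν' : E × ℝ → F such that ν(x, t) = t^n • ν'(x, t) for all x ∈ E and t ∈ ℝ. -/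
open scoped ContDiff

open MeasureTheory Metric Set

universe u v

section Param

variable {X : Type u} [NormedAddCommGroup X] [NormedSpace ℝ X]

attribute [local instance 101] secondCountableTopologyEither_of_left

private theorem param_F1_smooth {F : Type v} [NormedAddCommGroup F] [NormedSpace ℝ F]
    (f : X × ℝ → F) (hf : ContDiff ℝ ∞ f) :
    ContDiff ℝ ∞ (fun p : X × ℝ => (fderiv ℝ f p).comp (ContinuousLinearMap.inl ℝ X ℝ)) :=
  (hf.fderiv_right (by simp)).clm_comp contDiff_const

private theorem param_hasFDerivAt {F : Type v} [NormedAddCommGroup F] [NormedSpace ℝ F]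
    [CompleteSpace F]
    (f : X × ℝ → F) (hf : ContDiff ℝ ∞ f) (x₀ : X) :
    HasFDerivAt (fun x => ∫ u in (0:ℝ)..1, f (x, u))
      (∫ u in (0:ℝ)..1, (fderiv ℝ f (x₀, u)).comp (ContinuousLinearMap.inl ℝ X ℝ)) x₀ := by
  set F₁ : X × ℝ → X →L[ℝ] F :=
    fun p => (fderiv ℝ f p).comp (ContinuousLinearMap.inl ℝ X ℝ) with hF₁
  have hF₁s : ContDiff ℝ ∞ F₁ := param_F1_smooth f hf
  have hF₁c : Continuous F₁ := hF₁s.continuous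
  have hK : IsCompact ({x₀} ×ˢ Icc (0:ℝ) 1 : Set (X × ℝ)) :=
    isCompact_singleton.prod isCompact_Icc
  obtain ⟨M, hM⟩ := hK.exists_bound_of_continuousOn hF₁c.continuousOn
  obtain ⟨δ, δpos, hδ⟩ := hK.exists_thickening_subset_open
    (isOpen_lt hF₁c.norm continuous_const :
      IsOpen {p : X × ℝ | ‖F₁ p‖ < M + 1})
    (fun p hp => lt_of_le_of_lt (hM p hp) (lt_add_one M))
  have hmem : ∀ x ∈ ball x₀ δ, ∀ u ∈ Set.uIoc (0:ℝ) 1, ‖F₁ (x, u)‖ < M + 1 := by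
    intro x hx u hu
    have hu0 : u ∈ Set.Ioc (0:ℝ) 1 := by
      rwa [Set.uIoc_of_le (by norm_num : (0:ℝ) ≤ 1)] at hu
    apply hδ
    rw [mem_thickening_iff]
    refine ⟨(x₀, u), ⟨rfl, hu0.1.le, hu0.2⟩, ?_⟩
    rw [Prod.dist_eq]
    simp only [dist_self]
    exact max_lt hx δpos
  have hdiff : ∀ (u : ℝ) (x : X), HasFDerivAt (fun y => f (y, u)) (F₁ (x, u)) x := by
    intro u x
    exact ((hf.differentiable (by simp) (x, u)).hasFDerivAt).comp x
      (hasFDerivAt_prodMk_left x u)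
  exact intervalIntegral.hasFDerivAt_integral_of_dominated_of_fderiv_le
    (F := fun x u => f (x, u)) (F' := fun x u => F₁ (x, u)) (x₀ := x₀)
    (bound := fun _ => M + 1) (μ := volume) (a := 0) (b := 1) (ball_mem_nhds x₀ δpos)
    (Filter.Eventually.of_forall fun x =>
      (hf.continuous.comp (continuous_const.prodMk continuous_id)).aestronglyMeasurable)
    ((hf.continuous.comp (continuous_const.prodMk continuous_id)).intervalIntegrable 0 1)
    ((hF₁c.comp (continuous_const.prodMk continuous_id)).aestronglyMeasurable)
    (Filter.Eventually.of_forall fun u hu x hx => (hmem x hx u hu).le)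
    (intervalIntegrable_const)
    (Filter.Eventually.of_forall fun u _ x _ => hdiff u x)

private theorem param_contDiff (n : ℕ) :
    ∀ {F : Type (max u v)} [NormedAddCommGroup F] [NormedSpace ℝ F] [CompleteSpace F]
      (f : X × ℝ → F), ContDiff ℝ ∞ f →
      ContDiff ℝ (n : ℕ) (fun x => ∫ u in (0:ℝ)..1, f (x, u)) := by
  induction n with
  | zero =>
    intro F _ _ _ f hf
    rw [Nat.cast_zero, contDiff_zero]
    rw [continuous_iff_continuousAt]
    exact fun x => (param_hasFDerivAt f hf x).differentiableAt.continuousAt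
  | succ n ih =>
    intro F _ _ _ f hf
    have hc : ((n + 1 : ℕ) : WithTop ℕ∞) = (n : ℕ) + 1 := by push_cast; rfl
    rw [hc, contDiff_succ_iff_fderiv]
    refine ⟨fun x => (param_hasFDerivAt f hf x).differentiableAt, by simp, ?_⟩
    have hfd : fderiv ℝ (fun x => ∫ u in (0:ℝ)..1, f (x, u)) =
        fun x => ∫ u in (0:ℝ)..1,
          (fderiv ℝ f (x, u)).comp (ContinuousLinearMap.inl ℝ X ℝ) :=
      funext fun x => (param_hasFDerivAt f hf x).fderiv
    rw [hfd]
    exact ih _ (param_F1_smooth f hf)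

end Param

section Step

variable {E : Type u} {F : Type v} [NormedAddCommGroup E] [NormedSpace ℝ E]
  [NormedAddCommGroup F] [NormedSpace ℝ F] [CompleteSpace F]

/-- One step of the Hadamard lemma. -/
theorem hadamard_step (ν : E × ℝ → F) (hν : ContDiff ℝ ∞ ν)
    (h0 : ∀ x : E, ν (x, 0) = 0) :
    ∃ ν₁ : E × ℝ → F, ContDiff ℝ ∞ ν₁ ∧ ∀ x t, ν (x, t) = t • ν₁ (x, t) := by
  set dν : E × ℝ → F := fun p => fderiv ℝ ν p (0, 1) with hdν_def
  have hdν : ContDiff ℝ ∞ dν := (hν.fderiv_right (by simp)).clm_apply contDiff_const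
  have hderiv : ∀ (x : E) (t : ℝ), HasDerivAt (fun s => ν (x, s)) (dν (x, t)) t := by
    intro x t
    exact ((hν.differentiable (by simp) (x, t)).hasFDerivAt).comp_hasDerivAt t
      ((hasDerivAt_const t x).prodMk (hasDerivAt_id t))
  set eF : ULift.{u} F ≃L[ℝ] F := ContinuousLinearEquiv.ulift with heF
  set g : (E × ℝ) × ℝ → ULift.{u} F := fun q => eF.symm (dν (q.1.1, q.1.2 * q.2)) with hg_def
  have hinner : ContDiff ℝ ∞ (fun q : (E × ℝ) × ℝ => ((q.1.1 : E), q.1.2 * q.2)) :=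
    (contDiff_fst.comp contDiff_fst).prodMk
      ((contDiff_snd.comp contDiff_fst).mul contDiff_snd)
  have hg : ContDiff ℝ ∞ g := eF.symm.contDiff.comp (hdν.comp hinner)
  refine ⟨fun p => eF (∫ u in (0:ℝ)..1, g (p, u)), ?_, ?_⟩
  · exact eF.contDiff.comp (contDiff_infty.2 fun n => param_contDiff n g hg)
  · intro x t
    have hgint : IntervalIntegrable (fun u : ℝ => g ((x, t), u)) MeasureTheory.volume 0 1 :=
      (hg.continuous.comp (continuous_const.prodMk continuous_id)).intervalIntegrable 0 1
    have h1 : (eF : ULift.{u} F →L[ℝ] F) (∫ u in (0:ℝ)..1, g ((x, t), u))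
        = ∫ u in (0:ℝ)..1, dν (x, t * u) := by
      rw [← ContinuousLinearMap.intervalIntegral_comp_comm (eF : ULift.{u} F →L[ℝ] F) hgint]
      simp [hg_def]
    show ν (x, t) = t • eF (∫ u in (0:ℝ)..1, g ((x, t), u))
    rw [show eF (∫ u in (0:ℝ)..1, g ((x, t), u))
        = (eF : ULift.{u} F →L[ℝ] F) (∫ u in (0:ℝ)..1, g ((x, t), u)) from rfl, h1]
    have h2 : t • ∫ u in (0:ℝ)..1, dν (x, t * u) = ∫ s in (0:ℝ)..t, dν (x, s) := by
      have := intervalIntegral.smul_integral_comp_mul_left (fun s => dν (x, s)) (a := 0) (b := 1) t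
      simpa using this
    rw [h2]
    rw [intervalIntegral.integral_eq_sub_of_hasDerivAt (fun s _ => hderiv x s)
      ((hdν.continuous.comp (continuous_const.prodMk continuous_id)).intervalIntegrable 0 t)]
    simp [h0 x]

end Step

section Leibniz

variable {F : Type v} [NormedAddCommGroup F] [NormedSpace ℝ F]

private theorem deriv_id_smul (g : ℝ → F) (hg : ContDiff ℝ ∞ g) :
    deriv (fun s : ℝ => s • g s) = fun t => g t + t • deriv g t := by
  funext t
  have : HasDerivAt (fun s : ℝ => s • g s) (t • deriv g t + (1:ℝ) • g t) t :=
    (hasDerivAt_id t).smul ((hg.differentiable (by simp) t).hasDerivAt)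
  simpa [add_comm] using this.deriv

private theorem iteratedDeriv_add' {n : ℕ} {f g : ℝ → F} (hf : ContDiff ℝ ∞ f)
    (hg : ContDiff ℝ ∞ g) (x : ℝ) :
    iteratedDeriv n (fun t => f t + g t) x = iteratedDeriv n f x + iteratedDeriv n g x := by
  have hf' : ContDiff ℝ (n : ℕ) f := hf.of_le (by exact_mod_cast le_top)
  have hg' : ContDiff ℝ (n : ℕ) g := hg.of_le (by exact_mod_cast le_top)
  simp only [iteratedDeriv]
  rw [show (fun t => f t + g t) = f + g from rfl, iteratedFDeriv_add_apply hf'.contDiffAt hg'.contDiffAt]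
  simp

private theorem iteratedDeriv_id_smul :
    ∀ (m : ℕ) (g : ℝ → F), ContDiff ℝ ∞ g → ∀ t : ℝ,
      iteratedDeriv (m + 1) (fun s : ℝ => s • g s) t
        = t • iteratedDeriv (m + 1) g t + (m + 1 : ℕ) • iteratedDeriv m g t := by
  intro m
  induction m with
  | zero =>
    intro g hg t
    rw [iteratedDeriv_one, deriv_id_smul g hg]
    simp [iteratedDeriv_one, iteratedDeriv_zero, add_comm]
  | succ m ih =>
    intro g hg t
    have hdg : ContDiff ℝ ∞ (deriv g) := (contDiff_infty_iff_deriv.mp hg).2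
    rw [iteratedDeriv_succ' (n := m + 1), deriv_id_smul g hg]
    have h1 := iteratedDeriv_add' (n := m + 1) hg (show ContDiff ℝ ∞ fun s : ℝ => s • deriv g s from contDiff_id.smul hdg) t
    rw [h1, ih (deriv g) hdg t, ← iteratedDeriv_succ', ← iteratedDeriv_succ']
    conv_rhs => rw [show m + 1 + 1 = (m + 1) + 1 from rfl, succ_nsmul]
    rw [succ_nsmul]
    abel

end Leibniz

/-- Higher-order Hadamard lemma: if a smooth map `ν : E × ℝ → F` vanishes to
order `n - 1` at `t = 0` (all iterated `t`-derivatives of order `< n` vanish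
at `0`), then `ν = t ^ n • ν'` for a smooth `ν'`. -/
theorem hadamard_lemma_pow {E F : Type*} [NormedAddCommGroup E] [NormedSpace ℝ E]
    [NormedAddCommGroup F] [NormedSpace ℝ F] [CompleteSpace F]
    (n : ℕ) (hn : 0 < n)
    (ν : E × ℝ → F) (hν : ContDiff ℝ ∞ ν)
    (h0 : ∀ (x : E) (k : ℕ), k < n → iteratedDeriv k (fun t : ℝ => ν (x, t)) 0 = 0) :
    ∃ ν' : E × ℝ → F, ContDiff ℝ ∞ ν' ∧
      ∀ (x : E) (t : ℝ), ν (x, t) = t ^ n • ν' (x, t) := by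
  obtain ⟨m, rfl⟩ : ∃ m, n = m + 1 := ⟨n - 1, (Nat.succ_pred_eq_of_pos hn).symm⟩
  clear hn
  induction m generalizing ν with
  | zero =>
    obtain ⟨ν₁, hν₁, hid⟩ := hadamard_step ν hν
      (fun x => by simpa [iteratedDeriv_zero] using h0 x 0 (by norm_num))
    exact ⟨ν₁, hν₁, fun x t => by simpa [pow_one] using hid x t⟩
  | succ m ih =>
    obtain ⟨ν₁, hν₁, hid⟩ := hadamard_step ν hν
      (fun x => by simpa [iteratedDeriv_zero] using h0 x 0 (by norm_num))
    have h0' : ∀ (x : E) (k : ℕ), k < m + 1 → iteratedDeriv k (fun t : ℝ => ν₁ (x, t)) 0 = 0 := by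
      intro x k hk
      have hsx : ContDiff ℝ ∞ (fun t : ℝ => ν₁ (x, t)) :=
        hν₁.comp (contDiff_const.prodMk contDiff_id)
      have key := iteratedDeriv_id_smul k (fun t => ν₁ (x, t)) hsx 0
      have hfun : (fun s : ℝ => s • ν₁ (x, s)) = fun t : ℝ => ν (x, t) :=
        funext fun s => (hid x s).symm
      rw [hfun, h0 x (k + 1) (by omega), zero_smul, zero_add] at key
      have : ((k + 1 : ℕ) : ℝ) • iteratedDeriv k (fun t : ℝ => ν₁ (x, t)) 0 = 0 := by
        rw [Nat.cast_smul_eq_nsmul]; exact key.symm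
      rcases smul_eq_zero.mp this with h | h
      · exact absurd h (by positivity)
      · exact h
    obtain ⟨ν', hν', hid'⟩ := ih ν₁ hν₁ h0'
    refine ⟨ν', hν', fun x t => ?_⟩
    rw [hid x t, hid' x t, smul_smul, ← pow_succ']
end

section
/- Exponential perturbation step in the proof of Lemma 7.2 ('if mv ∉ V(h) ⊕ V_i(h) for all nonzero v ∈ V(h), then for t > 0 small enough e^{tm} V(h) ∩ ⊕V_i(h) = 0'): Let Y be a complex Banach space, let m : Y →L[ℂ] Y be a continuous linear operator, and let V and W be finite-dimensional subspaces of Y such that for every v ∈ V with v ≠ 0 one has m v ∉ V ⊔ W. Then there exists ε > 0 such that for every real t with 0 < t < ε and every v ∈ V, if exp((t : ℂ) • m) v ∈ W then v = 0. -/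
open Filter Topology NormedSpace

set_option maxHeartbeats 1000000 in
/-- Exponential perturbation step in the proof of Lemma 7.2: if `m` maps every
nonzero `v ∈ V` outside `V ⊔ W`, then for `t > 0` small enough the subspace
`exp (t • m) V` meets `W` only in `0`. -/
theorem exp_smul_inter_eq_bot {Y : Type*} [NormedAddCommGroup Y] [NormedSpace ℂ Y]
    [CompleteSpace Y] (m : Y →L[ℂ] Y) (V W : Submodule ℂ Y)
    [FiniteDimensional ℂ V] [FiniteDimensional ℂ W]
    (hm : ∀ v ∈ V, v ≠ 0 → m v ∉ V ⊔ W) :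
    ∃ ε : ℝ, 0 < ε ∧ ∀ t : ℝ, 0 < t → t < ε → ∀ v ∈ V,
      (NormedSpace.exp ((t : ℂ) • m)) v ∈ W → v = 0 := by
  by_contra hcon
  push_neg at hcon
  have key : ∀ n : ℕ, ∃ t : ℝ, 0 < t ∧ t < 1 / (n + 1) ∧ ∃ v : Y, v ∈ V ∧
      (NormedSpace.exp ((t : ℂ) • m)) v ∈ W ∧ ‖v‖ = 1 := by
    intro n
    obtain ⟨t, ht0, htn, v, hvV, hvW, hv0⟩ := hcon (1 / (n + 1)) (by positivity)
    have hnv : ‖v‖ ≠ 0 := norm_ne_zero_iff.mpr hv0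
    refine ⟨t, ht0, htn, ((‖v‖ : ℂ))⁻¹ • v, V.smul_mem _ hvV, ?_, ?_⟩
    · rw [map_smul]; exact W.smul_mem _ hvW
    · rw [norm_smul, norm_inv, Complex.norm_real, Real.norm_eq_abs, abs_norm,
        inv_mul_cancel₀ hnv]
  choose t ht0 htlt v hvV hvW hvnorm using key
  -- t tends to 0
  have htto : Tendsto t atTop (𝓝 0) := by
    refine squeeze_zero (fun n => (ht0 n).le) (fun n => (htlt n).le) ?_
    exact tendsto_one_div_add_atTop_nhds_zero_nat
  -- compactness: extract convergent subsequence of v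
  have hS : IsCompact ((Subtype.val : V → Y) '' Metric.sphere (0 : V) 1) :=
    (isCompact_sphere (0 : V) 1).image continuous_subtype_val
  have hmem : ∀ n, v n ∈ (Subtype.val : V → Y) '' Metric.sphere (0 : V) 1 := by
    intro n
    exact ⟨⟨v n, hvV n⟩, by simp [mem_sphere_iff_norm, Submodule.coe_norm, hvnorm n], rfl⟩
  obtain ⟨y, hyS, φ, hφ, hconv⟩ := hS.tendsto_subseq hmem
  obtain ⟨y', hy'sph, rfl⟩ := hyS
  have hyV : (y' : Y) ∈ V := y'.2
  have hynorm : ‖(y' : Y)‖ = 1 := by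
    simpa [mem_sphere_iff_norm, Submodule.coe_norm] using hy'sph
  have hy0 : (y' : Y) ≠ 0 := by
    intro h; rw [h, norm_zero] at hynorm; norm_num at hynorm
  -- derivative of exp at 0
  have hderiv : HasDerivAt (fun s : ℝ => NormedSpace.exp ((s : ℂ) • m)) m 0 := by
    have h1 : HasDerivAt (fun z : ℂ => NormedSpace.exp (z • m))
        (m * NormedSpace.exp ((((0 : ℝ)) : ℂ) • m)) (((0 : ℝ) : ℂ)) :=
      hasDerivAt_exp_smul_const' (𝕂 := ℂ) m _
    have hof : HasDerivAt (fun y : ℝ => (y : ℂ)) 1 0 := by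
      simpa using (hasDerivAt_id (0 : ℝ)).ofReal_comp
    have h2 := HasDerivAt.scomp (0 : ℝ) h1 hof
    simpa [NormedSpace.exp_zero, Function.comp_def] using h2
  have hslope : Tendsto (fun s : ℝ => s⁻¹ • (NormedSpace.exp ((s : ℂ) • m)
      - (1 : Y →L[ℂ] Y))) (𝓝[≠] (0 : ℝ)) (𝓝 (m : Y →L[ℂ] Y)) := by
    have h := hasDerivAt_iff_tendsto_slope.mp hderiv
    have heq : slope (fun s : ℝ => NormedSpace.exp ((s : ℂ) • m)) 0
        = fun s : ℝ => s⁻¹ • (NormedSpace.exp ((s : ℂ) • m) - (1 : Y →L[ℂ] Y)) := by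
      funext s
      rw [slope_def_module]
      simp [NormedSpace.exp_zero]
    rwa [heq] at h
  -- t ∘ φ tends to 0 within ≠ 0
  have htφ : Tendsto (fun n => t (φ n)) atTop (𝓝[≠] (0 : ℝ)) := by
    refine tendsto_nhdsWithin_of_tendsto_nhds_of_eventually_within _
      (htto.comp hφ.tendsto_atTop) ?_
    exact Eventually.of_forall fun n => (ht0 (φ n)).ne'
  -- the slope operators converge to m
  have hA : Tendsto (fun n => (t (φ n))⁻¹ • (NormedSpace.exp (((t (φ n)) : ℂ) • m)
      - (1 : Y →L[ℂ] Y))) atTop (𝓝 m) := hslope.comp htφ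
  -- apply to v ∘ φ
  have happ : Tendsto (fun n => ((t (φ n))⁻¹ • (NormedSpace.exp (((t (φ n)) : ℂ) • m)
      - (1 : Y →L[ℂ] Y))) (v (φ n))) atTop (𝓝 (m (y' : Y))) := by
    have hcont : Continuous fun p : (Y →L[ℂ] Y) × Y => p.1 p.2 :=
      isBoundedBilinearMap_apply.continuous
    exact (hcont.tendsto (m, (y' : Y))).comp (hA.prodMk_nhds hconv)
  -- each term lies in V ⊔ W
  have hmemVW : ∀ n, ((t (φ n))⁻¹ • (NormedSpace.exp (((t (φ n)) : ℂ) • m)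
      - (1 : Y →L[ℂ] Y))) (v (φ n)) ∈ V ⊔ W := by
    intro n
    have h1 : (NormedSpace.exp (((t (φ n)) : ℂ) • m)) (v (φ n)) ∈ V ⊔ W :=
      Submodule.mem_sup_right (hvW (φ n))
    have h2 : v (φ n) ∈ V ⊔ W := Submodule.mem_sup_left (hvV (φ n))
    have : ((t (φ n))⁻¹ • (NormedSpace.exp (((t (φ n)) : ℂ) • m)
        - (1 : Y →L[ℂ] Y))) (v (φ n))
        = (t (φ n))⁻¹ • ((NormedSpace.exp (((t (φ n)) : ℂ) • m)) (v (φ n)) - v (φ n)) := by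
      simp only [ContinuousLinearMap.smul_apply, ContinuousLinearMap.sub_apply,
        ContinuousLinearMap.one_apply]
    rw [this]
    exact (V ⊔ W).smul_of_tower_mem _ (Submodule.sub_mem _ h1 h2)
  -- V ⊔ W is closed, so the limit is in V ⊔ W
  have hclosed : IsClosed ((V ⊔ W : Submodule ℂ Y) : Set Y) :=
    Submodule.closed_of_finiteDimensional _
  have hlim : m (y' : Y) ∈ V ⊔ W :=
    hclosed.mem_of_tendsto happ (Eventually.of_forall hmemVW)
  exact hm _ hyV hy0 hlim
end

section
/- Embedding step in the proof of Claim 8.11 (the indices x_k = 3/8 − 2^{−dim V_k − 2}(1 + 1/(n_k + 2)) satisfy x_k > sup_{j ≺ k} x_j): Let S be a type with a linear order and d : S → ℕ a function such that (i) d j < d i implies j < i, and (ii) for every i the set {j | j ≤ i and d j = d i} is finite; let n i denote the cardinality of this finite set, and define x i := 3/8 − 2^(−(d i : ℤ) − 2) * (1 + 1/(n i + 2)) ∈ ℝ. Then: (a) 0 < x i < 3/8 for every i; (b) x is strictly monotone, i.e. j < i implies x j < x i; and (c) for every i ∈ S, sSup (x '' {j | j < i}) < x i (using Mathlib's real supremum,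 which is 0 on the empty set). -/
/-- Embedding step in the proof of Claim 8.11: the real numbers
`x i = 3/8 - 2 ^ (-(d i) - 2) * (1 + 1/(n i + 2))` lie in `(0, 3/8)`, are
strictly monotone in `i`, and each `x i` strictly exceeds the supremum of the
`x j` with `j < i`. -/
theorem xk_gt_sup_of_preceding {S : Type*} [LinearOrder S] (d : S → ℕ)
    (hd : ∀ i j : S, d j < d i → j < i)
    (hfin : ∀ i : S, {j : S | j ≤ i ∧ d j = d i}.Finite)
    (n : S → ℕ) (hn : ∀ i : S, n i = Nat.card {j : S | j ≤ i ∧ d j = d i})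
    (x : S → ℝ)
    (hx : ∀ i : S,
      x i = 3 / 8 - (2 : ℝ) ^ (-(d i : ℤ) - 2) * (1 + 1 / ((n i : ℝ) + 2))) :
    (∀ i : S, 0 < x i ∧ x i < 3 / 8) ∧
      StrictMono x ∧
      ∀ i : S, sSup (x '' {j : S | j < i}) < x i := by
  have hc : ∀ i : S, (0:ℝ) < (2:ℝ) ^ (-(d i : ℤ) - 2) := fun i => by positivity
  have hcle : ∀ i : S, (2:ℝ) ^ (-(d i : ℤ) - 2) ≤ 1/4 := by
    intro i
    calc (2:ℝ) ^ (-(d i : ℤ) - 2) ≤ (2:ℝ) ^ (-2 : ℤ) := by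
          apply zpow_le_zpow_right₀ one_le_two; omega
      _ = 1/4 := by norm_num
  have hn1 : ∀ i : S, 1 ≤ n i := by
    intro i
    rw [hn i]
    have : Nonempty {j : S | j ≤ i ∧ d j = d i} := ⟨⟨i, le_refl i, rfl⟩⟩
    have := (hfin i).to_subtype
    exact Nat.card_pos
  have hn1' : ∀ i : S, (1:ℝ) ≤ (n i : ℝ) := fun i => by exact_mod_cast hn1 i
  have hti : ∀ i : S, 1 / ((n i : ℝ) + 2) ≤ 1/3 := by
    intro i
    rw [div_le_div_iff₀ (by positivity) (by norm_num)]
    linarith [hn1' i]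
  have htpos : ∀ i : S, (0:ℝ) < 1 / ((n i : ℝ) + 2) := fun i => by positivity
  have hncard : ∀ j i : S, j < i → d j = d i → n j < n i := by
    intro j i hji hdji
    rw [hn j, hn i, Nat.card_coe_set_eq, Nat.card_coe_set_eq]
    apply Set.ncard_lt_ncard _ (hfin i)
    constructor
    · intro k hk
      exact ⟨hk.1.trans hji.le, hk.2.trans hdji⟩
    · intro hsub
      have : i ∈ {k : S | k ≤ j ∧ d k = d j} := hsub ⟨le_refl i, rfl⟩
      exact absurd this.1 (not_le.mpr hji)
  have hdouble : ∀ j i : S, d j < d i →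
      (2:ℝ) ^ (-(d i : ℤ) - 2) * 2 ≤ (2:ℝ) ^ (-(d j : ℤ) - 2) := by
    intro j i h
    have : ((2:ℝ) ^ (-(d i : ℤ) - 2) * 2) = (2:ℝ) ^ (-(d i : ℤ) - 1) := by
      rw [← zpow_add_one₀ (two_ne_zero)]; ring_nf
    rw [this]
    apply zpow_le_zpow_right₀ one_le_two; omega
  have hbounds : ∀ i : S, 0 < x i ∧ x i < 3 / 8 := by
    intro i
    rw [hx i]
    constructor
    · nlinarith [hc i, hcle i, hti i, htpos i]
    · nlinarith [hc i, htpos i]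
  have hmono : StrictMono x := by
    intro j i hji
    rw [hx i, hx j]
    rcases lt_trichotomy (d j) (d i) with h | h | h
    · nlinarith [hc i, hc j, hdouble j i h, hti i, htpos j,
        mul_pos (hc j) (htpos j), mul_le_mul_of_nonneg_left (hti i) (hc i).le]
    · have hnij : ((n j : ℝ)) < (n i : ℝ) := by exact_mod_cast hncard j i hji h
      have ht : 1 / ((n i : ℝ) + 2) < 1 / ((n j : ℝ) + 2) := by
        apply one_div_lt_one_div_of_lt (by positivity)
        linarith
      rw [h]
      nlinarith [hc i]
    · exact absurd (hd j i h) hji.asymm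
  refine ⟨hbounds, hmono, ?_⟩
  intro i
  set c := (2:ℝ) ^ (-(d i : ℤ) - 2) with hcdef
  have hB1 : (0:ℝ) ≤ 3/8 - c * (1 + 1 / ((n i : ℝ) + 1)) := by
    have hs : 1 / ((n i : ℝ) + 1) ≤ 1/2 := by
      rw [div_le_div_iff₀ (by positivity) (by norm_num)]
      linarith [hn1' i]
    nlinarith [hc i, hcle i]
  have hB2 : 3/8 - c * (1 + 1 / ((n i : ℝ) + 1)) < x i := by
    rw [hx i]
    have : 1 / ((n i : ℝ) + 2) < 1 / ((n i : ℝ) + 1) := by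
      apply one_div_lt_one_div_of_lt (by positivity)
      linarith
    nlinarith [hc i]
  refine lt_of_le_of_lt (Real.sSup_le ?_ hB1) hB2
  rintro y ⟨j, hj, rfl⟩
  rw [hx j]
  rcases lt_trichotomy (d j) (d i) with h | h | h
  · have hs : 1 / ((n i : ℝ) + 1) ≤ 1/2 := by
      rw [div_le_div_iff₀ (by positivity) (by norm_num)]
      linarith [hn1' i]
    nlinarith [hc i, hc j, hdouble j i h, htpos j,
      mul_pos (hc j) (htpos j)]
  · have hnij : n j < n i := hncard j i hj h
    have hnij' : ((n j : ℝ)) + 2 ≤ (n i : ℝ) + 1 := by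
      have : (n j : ℝ) + 1 ≤ (n i : ℝ) := by exact_mod_cast hnij
      linarith
    have ht : 1 / ((n i : ℝ) + 1) ≤ 1 / ((n j : ℝ) + 2) := by
      apply one_div_le_one_div_of_le (by positivity) hnij'
    have hcc : (2:ℝ) ^ (-(d j : ℤ) - 2) = c := by rw [hcdef, h]
    rw [hcc]
    nlinarith [hc i]
  · exact absurd (hd j i h) hj.asymm
end
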